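/- Suppose μ₁ = μ₂ =: μ and −1 < ρ < 0. Then the infimum of g(t,s) over (t,s) ∈ (0,∞)² equals 8(1−ρ)μ, and the set of minimizers of g on (0,∞)² is exactly the two-point set {((1−2ρ)/μ, 1/((1−2ρ)μ)), (1/((1−2ρ)μ), (1−2ρ)/μ)}. -/

import Mathlib

open Matrix

/-- The covariance matrix of `(X₁(t), X₂(s))`. -/
noncomputable def covM (ρ t s : ℝ) : Matrix (Fin 2) (Fin 2) ℝ :=
  !![t, ρ * min t s; ρ * min t s, s]

/-- The quadratic form `(x,y) Σ_{ts}⁻¹ (x,y)ᵀ`. -/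
noncomputable def quadF (ρ t s x y : ℝ) : ℝ :=
  dotProduct ![x, y] ((covM ρ t s)⁻¹.mulVec ![x, y])

/-- `g(t,s) = inf{ (x,y) Σ_{ts}⁻¹ (x,y)ᵀ : x ≥ 1+μ₁t, y ≥ 1+μ₂s }`. -/
noncomputable def gFun (μ₁ μ₂ ρ t s : ℝ) : ℝ :=
  sInf { q : ℝ | ∃ x y : ℝ, 1 + μ₁ * t ≤ x ∧ 1 + μ₂ * s ≤ y ∧ q = quadF ρ t s x y }

/-- `g₃(t,s)`: the quadratic form at the corner point `(1+μ₁t, 1+μ₂s)`. -/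
noncomputable def g3Fun (μ₁ μ₂ ρ t s : ℝ) : ℝ :=
  quadF ρ t s (1 + μ₁ * t) (1 + μ₂ * s)

lemma subclaim (k y : ℝ) (hk : 1 < k)
    (hc : 0 < 2*(y+1)*k - (y+1-k)*y) : 0 < 4*k^2*(y+1) - (y+1-k)^2 := by
  nlinarith [sq_nonneg (y+1-k), sq_nonneg (y+1+k), sq_nonneg y, sq_nonneg (y-k), sq_nonneg (y+1)]

lemma keyA (k x y : ℝ) (hk : 1 < k) (hx : -k < x) (hy : -1 < y) :
    0 ≤ (1+y)*x^2 + (y+1-k)*x*y + k^2*y^2 := by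
  rcases le_or_gt (2*(y+1)*k - (y+1-k)*y) 0 with hc | hc
  · nlinarith [mul_pos (by linarith : (0:ℝ) < x+k) (by linarith : (0:ℝ) < y+1),
      sq_nonneg (x+k), mul_pos (by linarith : (0:ℝ) < y+1)
        (by nlinarith : (0:ℝ) < (k-1)*y + k),
      mul_nonneg (by linarith : (0:ℝ) ≤ x+k) (by linarith : (0:ℝ) ≤ -(2*(y+1)*k - (y+1-k)*y)),
      mul_nonneg (mul_nonneg (by linarith : (0:ℝ) ≤ y+1) (by linarith : (0:ℝ) ≤ x+k)) (by linarith : (0:ℝ) ≤ x+k)]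
  · have h := subclaim k y hk hc
    nlinarith [sq_nonneg (2*(y+1)*x + (y+1-k)*y), mul_nonneg (sq_nonneg y) h.le,
      mul_pos (by linarith : (0:ℝ) < y+1) (by linarith : (0:ℝ) < y+1)]

lemma keyB (k x y : ℝ) (hk : 1 < k) (hx : -k < x) (hy : -1 < y)
    (h0 : (1+y)*x^2 + (y+1-k)*x*y + k^2*y^2 = 0) : x = 0 ∧ y = 0 := by
  rcases le_or_gt (2*(y+1)*k - (y+1-k)*y) 0 with hc | hc
  · exfalso
    nlinarith [mul_pos (by linarith : (0:ℝ) < x+k) (by linarith : (0:ℝ) < y+1),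
      sq_nonneg (x+k), mul_pos (by linarith : (0:ℝ) < y+1)
        (by nlinarith : (0:ℝ) < (k-1)*y + k),
      mul_nonneg (by linarith : (0:ℝ) ≤ x+k) (by linarith : (0:ℝ) ≤ -(2*(y+1)*k - (y+1-k)*y)),
      mul_nonneg (mul_nonneg (by linarith : (0:ℝ) ≤ y+1) (by linarith : (0:ℝ) ≤ x+k)) (by linarith : (0:ℝ) ≤ x+k)]
  · have h := subclaim k y hk hc
    have hid : (2*(y+1)*x + (y+1-k)*y)^2 + y^2*(4*k^2*(y+1)-(y+1-k)^2) = 0 := by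
      linear_combination (4*(1+y)) * h0
    have hy0 : y = 0 := by
      have h2 : y^2*(4*k^2*(y+1)-(y+1-k)^2) ≤ 0 := by nlinarith [sq_nonneg (2*(y+1)*x + (y+1-k)*y)]
      have h3 : y^2 ≤ 0 := by
        by_contra hcon
        push_neg at hcon
        nlinarith [mul_pos hcon h]
      have : y^2 = 0 := le_antisymm h3 (sq_nonneg y)
      exact pow_eq_zero_iff (by norm_num) |>.mp this
    subst hy0
    refine ⟨?_, rfl⟩
    have : (1+(0:ℝ))*x^2 = 0 := by linarith [h0]
    nlinarith [sq_nonneg x]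

lemma det_pos (ρ t s : ℝ) (hρl : -1 < ρ) (hρu : ρ < 0) (ht : 0 < t) (hs : 0 < s) :
    0 < t*s - ρ^2*(min t s)^2 := by
  have hρ2 : ρ^2 < 1 := by nlinarith
  rcases le_total t s with h | h
  · rw [min_eq_left h]
    nlinarith [mul_pos ht ht, mul_pos ht hs]
  · rw [min_eq_right h]
    nlinarith [mul_pos hs hs, mul_pos ht hs]

lemma quadF_eq (ρ t s x y : ℝ) (h : t*s - ρ^2*(min t s)^2 ≠ 0) :
    quadF ρ t s x y
      = (s*x^2 - 2*(ρ*min t s)*x*y + t*y^2) / (t*s - ρ^2*(min t s)^2) := by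
  have hdet : (covM ρ t s).det = t*s - ρ^2*(min t s)^2 := by
    simp [covM, Matrix.det_fin_two_of]; ring
  rw [quadF, Matrix.inv_def, hdet]
  simp [covM, Matrix.adjugate_fin_two, Matrix.mulVec, dotProduct,
    Fin.sum_univ_two, Ring.inverse_eq_inv']
  field_simp
  ring

lemma gFun_eq_corner (μ ρ t s : ℝ) (hμ : 0 < μ) (hρl : -1 < ρ) (hρu : ρ < 0)
    (ht : 0 < t) (hs : 0 < s) :
    gFun μ μ ρ t s = quadF ρ t s (1 + μ * t) (1 + μ * s) := by
  have hD := det_pos ρ t s hρl hρu ht hs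
  refine (IsLeast.csInf_eq ⟨⟨1 + μ * t, 1 + μ * s, le_refl _, le_refl _, rfl⟩, ?_⟩)
  rintro q ⟨x, y, hx, hy, rfl⟩
  rw [quadF_eq _ _ _ _ _ hD.ne', quadF_eq _ _ _ _ _ hD.ne']
  have hx0 : 0 < 1 + μ * t := by nlinarith
  have hy0 : 0 < 1 + μ * s := by nlinarith
  have hm : 0 ≤ min t s := le_min ht.le hs.le
  have hN : s*(1 + μ * t)^2 - 2*(ρ*min t s)*(1 + μ * t)*(1 + μ * s) + t*(1 + μ * s)^2
      ≤ s*x^2 - 2*(ρ*min t s)*x*y + t*y^2 := by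
    have h1 : (1 + μ * t)*(1 + μ * s) ≤ x*y :=
      mul_le_mul hx hy hy0.le (by linarith)
    have h2 : (1 + μ * t)^2 ≤ x^2 := by nlinarith
    have h3 : (1 + μ * s)^2 ≤ y^2 := by nlinarith
    have hc : 0 ≤ -(2*(ρ*min t s)) := by
      have := mul_nonneg (by linarith : (0:ℝ) ≤ -ρ) hm
      nlinarith
    nlinarith [mul_le_mul_of_nonneg_left h1 hc, mul_le_mul_of_nonneg_left h2 hs.le,
      mul_le_mul_of_nonneg_left h3 ht.le]
  gcongr

lemma gFun_symm (μ ρ t s : ℝ) (hρl : -1 < ρ) (hρu : ρ < 0) (ht : 0 < t) (hs : 0 < s) :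
    gFun μ μ ρ t s = gFun μ μ ρ s t := by
  have h1 := (det_pos ρ t s hρl hρu ht hs).ne'
  have h2 := (det_pos ρ s t hρl hρu hs ht).ne'
  have hq : ∀ x y : ℝ, quadF ρ t s x y = quadF ρ s t y x := by
    intro x y
    rw [quadF_eq _ _ _ _ _ h1, quadF_eq _ _ _ _ _ h2, min_comm s t]
    rw [mul_comm s t]
    ring_nf
  unfold gFun
  congr 1
  ext q
  constructor
  · rintro ⟨x, y, hx, hy, rfl⟩
    exact ⟨y, x, hy, hx, (hq x y)⟩
  · rintro ⟨x, y, hx, hy, rfl⟩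
    exact ⟨y, x, hy, hx, (hq y x).symm⟩

/-- The main computation in the case `s ≤ t`. -/
lemma gcase (μ ρ t s : ℝ) (hμ : 0 < μ) (hρl : -1 < ρ) (hρu : ρ < 0)
    (ht : 0 < t) (hs : 0 < s) (hts : s ≤ t) :
    8 * (1 - ρ) * μ ≤ gFun μ μ ρ t s ∧
    (gFun μ μ ρ t s = 8 * (1 - ρ) * μ ↔ t = (1 - 2*ρ)/μ ∧ s = 1/((1 - 2*ρ)*μ)) := by
  have hD := det_pos ρ t s hρl hρu ht hs
  have hmin : min t s = s := min_eq_right hts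
  have hk : (1:ℝ) < 1 - 2*ρ := by linarith
  set X : ℝ := μ*t - (1 - 2*ρ) with hX
  set Y : ℝ := (1 - 2*ρ)*μ*s - 1 with hY
  have hx : -(1 - 2*ρ) < X := by
    have := mul_pos hμ ht; rw [hX]; nlinarith
  have hy : -1 < Y := by
    have := mul_pos (mul_pos (by linarith : (0:ℝ) < 1 - 2*ρ) hμ) hs
    rw [hY]; nlinarith
  -- the main identity
  have hident :
      (1+Y)*X^2 + (Y+1-(1 - 2*ρ))*X*Y + (1 - 2*ρ)^2*Y^2
        = (1 - 2*ρ)*μ*((s*(1 + μ*t)^2 - 2*(ρ*s)*(1 + μ*t)*(1 + μ*s) + t*(1 + μ*s)^2)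
            - 8*(1 - ρ)*μ*(t*s - ρ^2*s^2)) := by
    rw [hX, hY]; ring
  have hQ0 : 0 ≤ (1+Y)*X^2 + (Y+1-(1 - 2*ρ))*X*Y + (1 - 2*ρ)^2*Y^2 :=
    keyA _ _ _ hk hx hy
  have hgf : gFun μ μ ρ t s
      = (s*(1 + μ*t)^2 - 2*(ρ*s)*(1 + μ*t)*(1 + μ*s) + t*(1 + μ*s)^2) / (t*s - ρ^2*s^2) := by
    rw [gFun_eq_corner μ ρ t s hμ hρl hρu ht hs, quadF_eq _ _ _ _ _ hD.ne', hmin]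
  have hDs : 0 < t*s - ρ^2*s^2 := by
    have h := hD; rw [hmin] at h; exact h
  have hkμ : 0 < (1 - 2*ρ)*μ := mul_pos (by linarith) hμ
  have hdiff : gFun μ μ ρ t s - 8 * (1 - ρ) * μ
      = ((1+Y)*X^2 + (Y+1-(1 - 2*ρ))*X*Y + (1 - 2*ρ)^2*Y^2) / ((1 - 2*ρ)*μ*(t*s - ρ^2*s^2)) := by
    rw [hgf, hident, eq_div_iff (mul_pos hkμ hDs).ne']
    have hne := hDs.ne'
    linear_combination ((1 - 2*ρ)*μ) * div_mul_cancel₀ (s*(1 + μ*t)^2 - 2*(ρ*s)*(1 + μ*t)*(1 + μ*s) + t*(1 + μ*s)^2) hne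
  constructor
  · have : 0 ≤ gFun μ μ ρ t s - 8 * (1 - ρ) * μ := by
      rw [hdiff]
      exact div_nonneg hQ0 (mul_pos hkμ hDs).le
    linarith
  · constructor
    · intro heq
      have hQz : (1+Y)*X^2 + (Y+1-(1 - 2*ρ))*X*Y + (1 - 2*ρ)^2*Y^2 = 0 := by
        have h0 : ((1+Y)*X^2 + (Y+1-(1 - 2*ρ))*X*Y + (1 - 2*ρ)^2*Y^2) / ((1 - 2*ρ)*μ*(t*s - ρ^2*s^2)) = 0 := by
          rw [← hdiff, heq]; ring
        exact (div_eq_zero_iff.mp h0).resolve_right (mul_pos hkμ hDs).ne'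
      obtain ⟨hX0, hY0⟩ := keyB _ _ _ hk hx hy hQz
      constructor
      · rw [hX] at hX0
        rw [eq_div_iff hμ.ne']
        linear_combination hX0
      · rw [hY] at hY0
        rw [eq_div_iff hkμ.ne']
        linear_combination hY0
    · rintro ⟨htv, hsv⟩
      have hX0 : X = 0 := by
        rw [hX, htv]; field_simp; ring
      have hY0 : Y = 0 := by
        rw [hY, hsv]; field_simp; ring
      have : gFun μ μ ρ t s - 8 * (1 - ρ) * μ = 0 := by
        rw [hdiff, hX0, hY0]; norm_num
      linarith

theorem stmt2 (μ : ℝ) (hμ : 0 < μ) (ρ : ℝ) (hρl : -1 < ρ) (hρu : ρ < 0) :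
    IsLeast { v : ℝ | ∃ t s : ℝ, 0 < t ∧ 0 < s ∧ v = gFun μ μ ρ t s }
      (8 * (1 - ρ) * μ) ∧
    { p : ℝ × ℝ | 0 < p.1 ∧ 0 < p.2 ∧ gFun μ μ ρ p.1 p.2 = 8 * (1 - ρ) * μ }
      = {((1 - 2 * ρ) / μ, 1 / ((1 - 2 * ρ) * μ)),
         (1 / ((1 - 2 * ρ) * μ), (1 - 2 * ρ) / μ)} := by
  have hk : (1:ℝ) < 1 - 2*ρ := by linarith
  have hkμ : 0 < (1 - 2*ρ)*μ := mul_pos (by linarith) hμ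
  have ht0 : 0 < (1 - 2*ρ)/μ := div_pos (by linarith) hμ
  have hs0 : 0 < 1/((1 - 2*ρ)*μ) := by positivity
  have hst : 1/((1 - 2*ρ)*μ) ≤ (1 - 2*ρ)/μ := by
    rw [div_le_div_iff₀ hkμ hμ]
    nlinarith
  have hmin_eq : gFun μ μ ρ ((1 - 2*ρ)/μ) (1/((1 - 2*ρ)*μ)) = 8 * (1 - ρ) * μ :=
    (gcase μ ρ _ _ hμ hρl hρu ht0 hs0 hst).2.mpr ⟨rfl, rfl⟩
  have lower : ∀ t s : ℝ, 0 < t → 0 < s → 8 * (1 - ρ) * μ ≤ gFun μ μ ρ t s := by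
    intro t s ht hs
    rcases le_total s t with h | h
    · exact (gcase μ ρ t s hμ hρl hρu ht hs h).1
    · rw [gFun_symm μ ρ t s hρl hρu ht hs]
      exact (gcase μ ρ s t hμ hρl hρu hs ht h).1
  refine ⟨⟨⟨(1 - 2*ρ)/μ, 1/((1 - 2*ρ)*μ), ht0, hs0, hmin_eq.symm⟩, ?_⟩, ?_⟩
  · rintro v ⟨t, s, ht, hs, rfl⟩
    exact lower t s ht hs
  · ext ⟨t, s⟩
    simp only [Set.mem_setOf_eq, Set.mem_insert_iff, Set.mem_singleton_iff, Prod.mk.injEq]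
    constructor
    · rintro ⟨ht, hs, heq⟩
      rcases le_total s t with h | h
      · left
        exact (gcase μ ρ t s hμ hρl hρu ht hs h).2.mp heq
      · right
        rw [gFun_symm μ ρ t s hρl hρu ht hs] at heq
        obtain ⟨h1, h2⟩ := (gcase μ ρ s t hμ hρl hρu hs ht h).2.mp heq
        exact ⟨h2, h1⟩
    · rintro (⟨h1, h2⟩ | ⟨h1, h2⟩)
      · subst h1; subst h2
        exact ⟨ht0, hs0, hmin_eq⟩
      · subst h1; subst h2
        refine ⟨hs0, ht0, ?_⟩
        rw [gFun_symm μ ρ _ _ hρl hρu hs0 ht0]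
        exact hmin_eq
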